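/- arXiv:1201.6087 — 2 statements merged into one kernel-verified Lean document; each statement's English description precedes it below -/
import Mathlib

section
/- For the metric dl² = dr² + c²r²/(c² − ω²r²) dφ² + dz², the Riemann curvature component R_{rφrφ} equals −3c⁴ω²r²/(c² − ω²r²)³. -/
/-- g_φφ component of the spatial metric. -/
noncomputable def gphiphi (c ω : ℝ) : ℝ → ℝ := fun r => c^2 * r^2 / (c^2 - ω^2 * r^2)

/-- Christoffel symbol Γ^r_{φφ} = −½ g^{rr} ∂_r g_φφ (with g^{rr} = 1). -/
noncomputable def GammaRphiphi (c ω : ℝ) : ℝ → ℝ := fun r => -(1/2) * deriv (gphiphi c ω) r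

/-- Christoffel symbol Γ^φ_{rφ} = ½ g^{φφ} ∂_r g_φφ. -/
noncomputable def GammaPhiRphi (c ω : ℝ) : ℝ → ℝ :=
  fun r => deriv (gphiphi c ω) r / (2 * gphiphi c ω r)

lemma gphiphi_hasDerivAt (c ω x : ℝ) (hx : c^2 - ω^2 * x^2 ≠ 0) :
    HasDerivAt (gphiphi c ω) (2 * c^4 * x / (c^2 - ω^2 * x^2)^2) x := by
  have h1 : HasDerivAt (fun y : ℝ => c^2 * y^2) (2 * c^2 * x) x := by
    simpa [mul_comm, mul_assoc, mul_left_comm] using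
      ((hasDerivAt_pow 2 x).const_mul (c^2))
  have h2 : HasDerivAt (fun y : ℝ => c^2 - ω^2 * y^2) (-(2 * ω^2 * x)) x := by
    simpa [mul_comm, mul_assoc, mul_left_comm] using
      (((hasDerivAt_pow 2 x).const_mul (ω^2)).const_sub (c^2))
  have := h1.fun_div h2 hx
  refine this.congr_deriv ?_
  field_simp
  ring

lemma deriv_gphiphi_eq (c ω : ℝ) {x : ℝ} (hx : c^2 - ω^2 * x^2 ≠ 0) :
    deriv (gphiphi c ω) x = 2 * c^4 * x / (c^2 - ω^2 * x^2)^2 :=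
  (gphiphi_hasDerivAt c ω x hx).deriv

/-- The Riemann curvature component
R_{rφrφ} = g_{rr} R^r_{φrφ} = ∂_r Γ^r_{φφ} − Γ^r_{φφ} Γ^φ_{φr}
(all other terms of R^l_{ijk} = ∂_j Γ^l_{ik} − ∂_k Γ^l_{ij} + Γ^l_{jm}Γ^m_{ik} − Γ^l_{km}Γ^m_{ij}
vanish for this diagonal metric) equals −3c⁴ω²r²/(c² − ω²r²)³. -/
theorem riemann_rphirphi (c ω r : ℝ) (hc : 0 < c) (hω : 0 < ω)
    (hr : 0 < r) (hr' : r < c / ω) :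
    deriv (GammaRphiphi c ω) r - GammaRphiphi c ω r * GammaPhiRphi c ω r
      = -(3 * c^4 * ω^2 * r^2) / (c^2 - ω^2 * r^2)^3 := by
  have hrc : r * ω < c := (lt_div_iff₀ hω).mp hr'
  have hD : 0 < c^2 - ω^2 * r^2 := by nlinarith [mul_pos (sub_pos.mpr hrc) (show (0:ℝ) < c + r * ω by positivity)]
  have hDne : c^2 - ω^2 * r^2 ≠ 0 := ne_of_gt hD
  -- eventual equality of GammaRphiphi with an explicit function near r
  have hopen : IsOpen {x : ℝ | c^2 - ω^2 * x^2 ≠ 0} := by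
    have : Continuous fun x : ℝ => c^2 - ω^2 * x^2 := by continuity
    exact isOpen_ne.preimage this
  have hmem : {x : ℝ | c^2 - ω^2 * x^2 ≠ 0} ∈ nhds r :=
    hopen.mem_nhds hDne
  have hev : GammaRphiphi c ω =ᶠ[nhds r]
      (fun x => -(c^4 * x) / (c^2 - ω^2 * x^2)^2) := by
    filter_upwards [hmem] with x hx
    simp only [GammaRphiphi, deriv_gphiphi_eq c ω hx]
    ring
  -- derivative of the explicit function
  have h1 : HasDerivAt (fun x : ℝ => -(c^4 * x)) (-(c^4)) r := by
    simpa using ((hasDerivAt_id r).const_mul (c^4)).fun_neg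
  have h2 : HasDerivAt (fun x : ℝ => (c^2 - ω^2 * x^2)^2)
      (2 * (c^2 - ω^2 * r^2) * (-(2 * ω^2 * r))) r := by
    have hb : HasDerivAt (fun y : ℝ => c^2 - ω^2 * y^2) (-(2 * ω^2 * r)) r := by
      simpa [mul_comm, mul_assoc, mul_left_comm] using
        (((hasDerivAt_pow 2 r).const_mul (ω^2)).const_sub (c^2))
    simpa [mul_comm, mul_assoc, mul_left_comm] using hb.fun_pow 2
  have hD2 : ((c^2 - ω^2 * r^2)^2 : ℝ) ≠ 0 := pow_ne_zero _ hDne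
  have hder : HasDerivAt (fun x => -(c^4 * x) / (c^2 - ω^2 * x^2)^2)
      ((-(c^4) * (c^2 - ω^2 * r^2)^2 - (-(c^4 * r)) * (2 * (c^2 - ω^2 * r^2) * (-(2 * ω^2 * r))))
        / ((c^2 - ω^2 * r^2)^2)^2) r := h1.div h2 hD2
  have hderiv : deriv (GammaRphiphi c ω) r
      = (-(c^4) * (c^2 - ω^2 * r^2)^2 - (-(c^4 * r)) * (2 * (c^2 - ω^2 * r^2) * (-(2 * ω^2 * r))))
        / ((c^2 - ω^2 * r^2)^2)^2 := by
    rw [hev.deriv_eq]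
    exact hder.deriv
  have hg : gphiphi c ω r = c^2 * r^2 / (c^2 - ω^2 * r^2) := rfl
  have hgne : (2 : ℝ) * gphiphi c ω r ≠ 0 := by
    rw [hg]
    positivity
  rw [hderiv]
  simp only [GammaRphiphi, GammaPhiRphi, deriv_gphiphi_eq c ω hDne, hg]
  field_simp
  ring
end

section
/- For the metric dl² = dr² + c²r²/(c² − ω²r²) dφ² + dz², the scalar curvature equals −6c²ω²/(c² − ω²r²)², and in particular is strictly negative for all 0 < r < c/ω. -/
/-- The only nonvanishing Riemann component R_{rφrφ}. -/
noncomputable def RiemRphiRphi (c ω : ℝ) : ℝ → ℝ :=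
  fun r => deriv (GammaRphiphi c ω) r - GammaRphiphi c ω r * GammaPhiRphi c ω r

lemma hasDeriv_g (c ω x : ℝ) (hx : c^2 - ω^2 * x^2 ≠ 0) :
    HasDerivAt (gphiphi c ω) (2*c^4*x/(c^2 - ω^2*x^2)^2) x := by
  have h1 : HasDerivAt (fun y : ℝ => c^2 * y^2) (c^2 * (2*x)) x := by
    simpa using ((hasDerivAt_pow 2 x).const_mul (c^2))
  have h2 : HasDerivAt (fun y : ℝ => c^2 - ω^2 * y^2) (0 - ω^2 * (2*x)) x := by
    exact (hasDerivAt_const x (c^2)).sub (by simpa using (hasDerivAt_pow 2 x).const_mul (ω^2))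
  have := h1.div h2 hx
  refine this.congr_deriv ?_
  field_simp
  ring

lemma deriv_g_eq (c ω x : ℝ) (hx : c^2 - ω^2 * x^2 ≠ 0) :
    deriv (gphiphi c ω) x = 2*c^4*x/(c^2 - ω^2*x^2)^2 :=
  (hasDeriv_g c ω x hx).deriv

lemma open_set (c ω : ℝ) : IsOpen {x : ℝ | c^2 - ω^2 * x^2 ≠ 0} := by
  have : Continuous fun x : ℝ => c^2 - ω^2 * x^2 := by continuity
  exact isOpen_ne_fun this continuous_const

/-- The scalar curvature R = g^{ki}g^{lj}R_{klij} = 2 g^{rr} g^{φφ} R_{rφrφ}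
(all other terms vanish) equals −6c²ω²/(c² − ω²r²)², which is strictly negative
for 0 < r < c/ω. -/
theorem scalar_curvature (c ω r : ℝ) (hc : 0 < c) (hω : 0 < ω)
    (hr : 0 < r) (hr' : r < c / ω) :
    2 * (gphiphi c ω r)⁻¹ * RiemRphiRphi c ω r
        = -(6 * c^2 * ω^2) / (c^2 - ω^2 * r^2)^2 ∧
      2 * (gphiphi c ω r)⁻¹ * RiemRphiRphi c ω r < 0 := by
  have hωr : r * ω < c := (lt_div_iff₀ hω).mp hr'
  have hD : 0 < c^2 - ω^2 * r^2 := by nlinarith [mul_pos hr hω, sq_nonneg (c - r * ω)]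
  have hDne : c^2 - ω^2 * r^2 ≠ 0 := ne_of_gt hD
  have hrne : r ≠ 0 := ne_of_gt hr
  have hcne : c ≠ 0 := ne_of_gt hc
  -- deriv of GammaRphiphi : it agrees with explicit function near r
  have hmem : {x : ℝ | c^2 - ω^2 * x^2 ≠ 0} ∈ nhds r :=
    (open_set c ω).mem_nhds hDne
  have heq : GammaRphiphi c ω =ᶠ[nhds r]
      (fun x => -(1/2) * (2*c^4*x/(c^2 - ω^2*x^2)^2)) := by
    filter_upwards [hmem] with x hx
    simp only [GammaRphiphi, deriv_g_eq c ω x hx]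
  -- derivative of the explicit function
  have hG' : HasDerivAt (fun x => -(1/2) * (2*c^4*x/(c^2 - ω^2*x^2)^2))
      (-(c^4 * ((c^2 - ω^2*r^2) + 4*ω^2*r^2) / (c^2 - ω^2*r^2)^3)) r := by
    have hnum : HasDerivAt (fun y : ℝ => 2*c^4*y) (2*c^4) r := by
      simpa using (hasDerivAt_id r).const_mul (2*c^4)
    have hden : HasDerivAt (fun y : ℝ => (c^2 - ω^2*y^2)^2)
        (2 * (c^2 - ω^2*r^2) ^ 1 * (0 - ω^2*(2*r))) r := by
      have h2 : HasDerivAt (fun y : ℝ => c^2 - ω^2 * y^2) (0 - ω^2 * (2*r)) r :=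
        (hasDerivAt_const r (c^2)).sub (by simpa using (hasDerivAt_pow 2 r).const_mul (ω^2))
      exact (h2.pow 2).congr_deriv (by norm_num)
    have hdne : (c^2 - ω^2*r^2)^2 ≠ 0 := pow_ne_zero _ hDne
    have := (hnum.div hden hdne).const_mul (-(1/2) : ℝ)
    refine this.congr_deriv ?_
    field_simp
    ring
  have hderivG : deriv (GammaRphiphi c ω) r
      = -(c^4 * ((c^2 - ω^2*r^2) + 4*ω^2*r^2) / (c^2 - ω^2*r^2)^3) := by
    rw [heq.deriv_eq, hG'.deriv]
  have hgval : gphiphi c ω r = c^2 * r^2 / (c^2 - ω^2 * r^2) := rfl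
  have hgne : gphiphi c ω r ≠ 0 := by
    rw [hgval]
    positivity
  have hderiv_g := deriv_g_eq c ω r hDne
  have hGamma : GammaRphiphi c ω r = -(1/2) * (2*c^4*r/(c^2 - ω^2*r^2)^2) := by
    simp only [GammaRphiphi, hderiv_g]
  have hmain : 2 * (gphiphi c ω r)⁻¹ * RiemRphiRphi c ω r
      = -(6 * c^2 * ω^2) / (c^2 - ω^2 * r^2)^2 := by
    simp only [RiemRphiRphi, GammaPhiRphi, hderivG, hGamma, hderiv_g, hgval]
    field_simp
    ring
  refine ⟨hmain, ?_⟩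
  rw [hmain]
  apply div_neg_of_neg_of_pos
  · have : 0 < 6 * c^2 * ω^2 := by positivity
    linarith
  · positivity
end
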